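/- Suppose two counters i and j each count upward at rate between φ and φρ (for reals φ > 0, ρ ≥ 1), both are restarted from 0 at respective times s_i, s_j with |s_i − s_j| ≤ Σ, and each counter is capped at m − 1 (it halts upon reaching m − 1), where m ≤ φT⁻ and both counters run for at most time T⁻ before the next restart. Then at any common time t before either counter is restarted again, the counter values v_i(t) = min(m − 1, ⌊φ·r_i·(t − s_i)⌋) with r_i ∈ [1, ρ]... satisfy |v_i(t) − v_j(t)| ≤ ⌈φρΣ + (1 − 1/ρ)m⌉. -/
import Mathlib

lemma counter_aux (phi rho S : ℝ) (m : ℕ) (a b : ℝ)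
    (hphi : 0 < phi) (hrho : 1 ≤ rho) (hS : 0 ≤ S) (hm : 1 ≤ m)
    (hab : a / rho - phi * S ≤ b) :
    min ((m : ℤ) - 1) ⌊a⌋ - min ((m : ℤ) - 1) ⌊b⌋
      ≤ ⌈phi * rho * S + (1 - 1 / rho) * m⌉ := by
  have hrpos : (0:ℝ) < rho := lt_of_lt_of_le one_pos hrho
  have hinv : 1 / rho ≤ 1 := by rw [div_le_one hrpos]; exact hrho
  have hinvpos : (0:ℝ) < 1 / rho := by positivity
  have hx0 : (0:ℝ) ≤ phi * rho * S + (1 - 1 / rho) * m := by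
    have h1 : (0:ℝ) ≤ phi * rho * S := by positivity
    have h2 : (0:ℝ) ≤ (1 - 1 / rho) * m :=
      mul_nonneg (by linarith) (Nat.cast_nonneg m)
    linarith
  have hceil : (0:ℤ) ≤ ⌈phi * rho * S + (1 - 1 / rho) * m⌉ := Int.ceil_nonneg hx0
  rcases le_or_gt ((m:ℤ) - 1) ⌊b⌋ with h | h
  · rw [min_eq_left h]
    have : min ((m:ℤ) - 1) ⌊a⌋ ≤ (m:ℤ) - 1 := min_le_left _ _
    linarith
  · rw [min_eq_right h.le]
    have h1 : b - 1 < (⌊b⌋:ℝ) := Int.sub_one_lt_floor b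
    have h2 : ((min ((m:ℤ) - 1) ⌊a⌋ : ℤ):ℝ) ≤ min ((m:ℝ) - 1) a := by
      push_cast
      exact min_le_min (le_refl _) (Int.floor_le a)
    have h3 : min ((m:ℝ) - 1) a ≤ (1 - 1 / rho) * m + a / rho := by
      rcases le_total a ((m:ℝ) - 1) with hc | hc
      · rw [min_eq_right hc]
        have ha' : a / rho = a * (1 / rho) := by ring
        have hm1 : (1:ℝ) ≤ m := by exact_mod_cast hm
        nlinarith [mul_nonneg (sub_nonneg.mpr hinv) (sub_nonneg.mpr hc)]
      · rw [min_eq_left hc]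
        have hm1 : (1:ℝ) ≤ m := by exact_mod_cast hm
        have h5 : (1 - 1/rho) * (m:ℝ) + a/rho = ((rho - 1) * m + a) / rho := by
          field_simp
        rw [h5, le_div_iff₀ hrpos]
        nlinarith
    have hPS : phi * S ≤ phi * rho * S := by
      nlinarith [mul_nonneg (mul_nonneg hphi.le hS) (sub_nonneg.mpr hrho)]
    have key : ((min ((m:ℤ) - 1) ⌊a⌋ - ⌊b⌋ : ℤ) : ℝ) - 1
        < phi * rho * S + (1 - 1 / rho) * m := by
      push_cast
      push_cast at h2
      linarith
    have : min ((m:ℤ) - 1) ⌊a⌋ - ⌊b⌋ - 1 < ⌈phi * rho * S + (1 - 1 / rho) * m⌉ := by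
      apply Int.lt_ceil.mpr
      push_cast
      push_cast at key
      linarith
    omega

theorem counter_skew_bound (phi rho S T' si sj ri rj t : ℝ) (m : ℕ)
    (hphi : 0 < phi) (hrho : 1 ≤ rho) (hS : 0 ≤ S) (hm : 1 ≤ m)
    (hskew : |si - sj| ≤ S) (hcap : (m : ℝ) ≤ phi * T')
    (hri : ri ∈ Set.Icc 1 rho) (hrj : rj ∈ Set.Icc 1 rho)
    (hti : si ≤ t) (htj : sj ≤ t) :
    |min ((m : ℤ) - 1) ⌊phi * ri * (t - si)⌋ -
      min ((m : ℤ) - 1) ⌊phi * rj * (t - sj)⌋|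
      ≤ ⌈phi * rho * S + (1 - 1 / rho) * m⌉ := by
  obtain ⟨hri1, hri2⟩ := hri
  obtain ⟨hrj1, hrj2⟩ := hrj
  have hrpos : (0:ℝ) < rho := lt_of_lt_of_le one_pos hrho
  obtain ⟨hs1, hs2⟩ := abs_sub_le_iff.mp hskew
  have hdi : 0 ≤ t - si := by linarith
  have hdj : 0 ≤ t - sj := by linarith
  have hab : phi * ri * (t - si) / rho - phi * S ≤ phi * rj * (t - sj) := by
    have h1 : phi * ri * (t - si) / rho ≤ phi * (t - si) := by
      rw [div_le_iff₀ hrpos]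
      nlinarith [mul_nonneg hphi.le hdi]
    have h2 : phi * (t - sj) ≤ phi * rj * (t - sj) := by
      nlinarith [mul_nonneg hphi.le hdj]
    have h3 : phi * (t - si) - phi * S ≤ phi * (t - sj) := by nlinarith
    linarith
  have hba : phi * rj * (t - sj) / rho - phi * S ≤ phi * ri * (t - si) := by
    have h1 : phi * rj * (t - sj) / rho ≤ phi * (t - sj) := by
      rw [div_le_iff₀ hrpos]
      nlinarith [mul_nonneg hphi.le hdj]
    have h2 : phi * (t - si) ≤ phi * ri * (t - si) := by
      nlinarith [mul_nonneg hphi.le hdi]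
    have h3 : phi * (t - sj) - phi * S ≤ phi * (t - si) := by nlinarith
    linarith
  rw [abs_sub_le_iff]
  exact ⟨counter_aux phi rho S m _ _ hphi hrho hS hm hab,
         counter_aux phi rho S m _ _ hphi hrho hS hm hba⟩
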